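/- For 0 < q < 1, ν > 0, and k* = ⌊1/(1-q)⌋, one has Σ_{k=1}^∞ k^ν q^{k-2}[k(1-q)-1] > 0, since k^ν ≤ (k*)^ν whenever k(1-q) - 1 ≤ 0 and k^ν > (k*)^ν whenever k > k*. -/

import Mathlib

lemma aux_summable (q : ℝ) (hq0 : 0 < q) (hq1 : q < 1) (p : ℝ) :
    Summable (fun k : ℕ => ((k : ℝ) + 1) ^ p * q ^ k) := by
  set n := ⌈p⌉₊ with hn
  have hbase : Summable (fun k : ℕ => (k : ℝ) ^ n * q ^ k) := by
    have hq : ‖q‖ < 1 := by rw [Real.norm_eq_abs, abs_lt]; constructor <;> linarith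
    exact summable_pow_mul_geometric_of_norm_lt_one n hq
  have hshift : Summable (fun k : ℕ => ((k : ℝ) + 1) ^ n * q ^ (k + 1)) := by
    have := (summable_nat_add_iff 1).2 hbase
    convert this using 2 with k <;> try rfl
    push_cast
    ring
  have h1 : Summable (fun k : ℕ => ((k : ℝ) + 1) ^ n * q ^ k) := by
    have := hshift.mul_left q⁻¹
    convert this using 2 with k <;> try rfl
    rw [pow_succ]
    field_simp
  refine Summable.of_nonneg_of_le (fun k => by positivity) (fun k => ?_) h1
  have h2 : ((k : ℝ) + 1) ^ p ≤ ((k : ℝ) + 1) ^ (n : ℝ) := by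
    exact Real.rpow_le_rpow_of_exponent_le (by linarith [Nat.cast_nonneg (α := ℝ) k]) (Nat.le_ceil p)
  rw [Real.rpow_natCast] at h2
  exact mul_le_mul_of_nonneg_right h2 (pow_nonneg hq0.le k)

/-- For `0 < q < 1` and `ν > 0`, the weighted series
`∑_{k=1}^∞ k^ν q^(k-2) [k(1-q) - 1]` is strictly positive.
(Summation variable shifted: index `k : ℕ` corresponds to the original `k + 1 ≥ 1`.) -/
theorem geom_weighted_drift_series_pos (q ν : ℝ) (hq0 : 0 < q) (hq1 : q < 1)
    (hν : 0 < ν) :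
    0 < ∑' k : ℕ, ((k : ℝ) + 1) ^ ν * q ^ ((k : ℤ) - 1) *
      (((k : ℝ) + 1) * (1 - q) - 1) := by
  have h1q : 0 < 1 - q := by linarith
  set x : ℝ := (1 - q)⁻¹ with hx
  have hx1 : 1 < x := by
    rw [hx, lt_inv_comm₀ one_pos h1q]; linarith
  set m : ℕ := ⌊x⌋₊ with hm
  have hm1 : 1 ≤ m := Nat.le_floor (by push_cast; linarith)
  have hmle : (m : ℝ) ≤ x := Nat.floor_le (by positivity)
  have hmlt : x < (m : ℝ) + 1 := Nat.lt_floor_add_one x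
  set c : ℝ := (m : ℝ) ^ ν with hc
  set f : ℕ → ℝ := fun k => ((k : ℝ) + 1) ^ ν * q ^ ((k : ℤ) - 1) *
      (((k : ℝ) + 1) * (1 - q) - 1) with hf
  set h : ℕ → ℝ := fun k => q ^ ((k : ℤ) - 1) * (((k : ℝ) + 1) * (1 - q) - 1) with hh
  set g : ℕ → ℝ := fun k => (((k : ℝ) + 1) ^ ν - c) * q ^ ((k : ℤ) - 1) *
      (((k : ℝ) + 1) * (1 - q) - 1) with hg
  have hzpow : ∀ k : ℕ, q ^ ((k : ℤ) - 1) = q⁻¹ * q ^ k := by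
    intro k
    rw [zpow_sub₀ hq0.ne', zpow_natCast, zpow_one]
    ring
  -- summability
  have sgeo : Summable (fun k : ℕ => q ^ k) := summable_geometric_of_lt_one hq0.le hq1
  have skgeo : Summable (fun k : ℕ => (k : ℝ) * q ^ k) := by
    have hq : ‖q‖ < 1 := by rw [Real.norm_eq_abs, abs_lt]; constructor <;> linarith
    simpa using summable_pow_mul_geometric_of_norm_lt_one 1 hq
  have shsum : Summable h := by
    have : Summable (fun k : ℕ => (q⁻¹ * (1 - q)) * ((k : ℝ) * q ^ k) - q ^ k) :=
      (skgeo.mul_left _).sub sgeo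
    refine this.congr fun k => ?_
    simp only [hh, hzpow]
    field_simp
    ring
  have sfsum : Summable f := by
    have s1 := aux_summable q hq0 hq1 (ν + 1)
    have s2 := aux_summable q hq0 hq1 ν
    have : Summable (fun k : ℕ => (q⁻¹ * (1 - q)) * (((k : ℝ) + 1) ^ (ν + 1) * q ^ k)
        - q⁻¹ * (((k : ℝ) + 1) ^ ν * q ^ k)) := (s1.mul_left _).sub (s2.mul_left _)
    refine this.congr fun k => ?_
    simp only [hf, hzpow]
    have : ((k : ℝ) + 1) ^ (ν + 1) = ((k : ℝ) + 1) ^ ν * ((k : ℝ) + 1) := by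
      rw [Real.rpow_add (by positivity), Real.rpow_one]
    rw [this]
    field_simp
  have sgsum : Summable g := by
    have : Summable (fun k => f k - c * h k) := sfsum.sub (shsum.mul_left c)
    refine this.congr fun k => ?_
    simp only [hf, hg, hh]
    ring
  -- tsum h = 0
  have htsum : ∑' k, h k = 0 := by
    have e1 : ∀ k : ℕ, h k = (q⁻¹ * (1 - q)) * ((k : ℝ) * q ^ k) - q ^ k := by
      intro k; simp only [hh, hzpow]; field_simp; ring
    rw [tsum_congr e1, Summable.tsum_sub (skgeo.mul_left _) sgeo, tsum_mul_left,
      tsum_coe_mul_geometric_of_norm_lt_one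
        (by rw [Real.norm_eq_abs, abs_lt]; constructor <;> linarith),
      tsum_geometric_of_lt_one hq0.le hq1]
    field_simp
    ring
  -- g is nonneg, positive at m
  have hgnn : ∀ k : ℕ, 0 ≤ g k := by
    intro k
    have hqp : (0 : ℝ) < q ^ ((k : ℤ) - 1) := zpow_pos hq0 _
    rcases le_or_gt (k + 1) m with hk | hk
    · have hkr : (k : ℝ) + 1 ≤ (m : ℝ) := by exact_mod_cast hk
      have h2 : ((k : ℝ) + 1) * (1 - q) - 1 ≤ 0 := by
        have hle : (k : ℝ) + 1 ≤ 1 / (1 - q) := by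
          rw [one_div, ← hx]; exact le_trans hkr hmle
        rw [le_div_iff₀ h1q] at hle
        linarith
      have h3 : ((k : ℝ) + 1) ^ ν - c ≤ 0 := by
        have := Real.rpow_le_rpow (by positivity) hkr hν.le
        rw [hc]; linarith
      simp only [hg]
      have hab : (((k : ℝ) + 1) ^ ν - c) * q ^ ((k : ℤ) - 1) ≤ 0 :=
        mul_nonpos_iff.2 (Or.inr ⟨h3, hqp.le⟩)
      nlinarith [mul_nonneg (neg_nonneg.2 hab) (neg_nonneg.2 h2)]
    · have hkr : (m : ℝ) < (k : ℝ) + 1 := by exact_mod_cast hk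
      have h2 : 0 ≤ ((k : ℝ) + 1) * (1 - q) - 1 := by
        have hxk : 1 / (1 - q) < (k : ℝ) + 1 := by
          rw [one_div, ← hx]; exact lt_of_lt_of_le hmlt (by exact_mod_cast hk)
        rw [div_lt_iff₀ h1q] at hxk
        linarith
      have h3 : 0 ≤ ((k : ℝ) + 1) ^ ν - c := by
        have := Real.rpow_le_rpow (by positivity) hkr.le hν.le
        rw [hc]; linarith
      simp only [hg]
      exact mul_nonneg (mul_nonneg h3 hqp.le) h2
  have hgpos : 0 < g m := by
    have hqp : (0 : ℝ) < q ^ ((m : ℤ) - 1) := zpow_pos hq0 _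
    have h2 : 0 < ((m : ℝ) + 1) * (1 - q) - 1 := by
      have hxk : x < (m : ℝ) + 1 := hmlt
      rw [hx, inv_lt_iff_one_lt_mul₀ h1q] at hxk
      nlinarith
    have h3 : 0 < ((m : ℝ) + 1) ^ ν - c := by
      have := Real.rpow_lt_rpow (by positivity) (by linarith : (m : ℝ) < (m : ℝ) + 1) hν
      rw [hc]; linarith
    simp only [hg]
    positivity
  have hpos : 0 < ∑' k, g k := Summable.tsum_pos sgsum hgnn m hgpos
  have key : ∑' k, f k = ∑' k, g k + c * ∑' k, h k := by
    rw [← tsum_mul_left, ← Summable.tsum_add sgsum (shsum.mul_left c)]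
    refine tsum_congr fun k => ?_
    simp only [hf, hg, hh]
    ring
  calc (0:ℝ) < ∑' k, g k := hpos
    _ = ∑' k, f k := by rw [key, htsum]; ring
    _ = _ := rfl
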